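/- Let M be a matroid on a finite linearly ordered ground set E and let B be a basis of M. There exists a unique subset F of E such that: (i) B ∩ F is a basis of M(F) and B \ F is a basis of M/F; (ii) Int_{M(F)}(B ∩ F) = ∅; (iii) Ext_{M(F)}(B ∩ F) = Ext_M(B); (iv) Int_{M/F}(B \ F) = Int_M(B); (v) Ext_{M/F}(B \ F) = ∅. Moreover, this unique subset F is a cyclic flat of M. -/

import Mathlib

open Matroid Set

namespace ActiveBij

variable {α : Type*}

/-- Deletion of a set of elements from a matroid. -/
def del (M : Matroid α) (D : Set α) : Matroid α := M ↾ (M.E \ D)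

/-- Contraction of a set of elements of a matroid. -/
def con (M : Matroid α) (C : Set α) : Matroid α := (del M✶ C)✶

/-- The minor `M(G)/F` : restriction to `G` followed by contraction of `F`. -/
def minor (M : Matroid α) (G F : Set α) : Matroid α := con (M ↾ G) F

/-- A circuit of a matroid : a minimal dependent set. -/
def Cct (M : Matroid α) (C : Set α) : Prop := Minimal M.Dep C

/-- A cocircuit of a matroid : a circuit of the dual. -/
def Cocct (M : Matroid α) (C : Set α) : Prop := Cct M✶ C

/-- The fundamental circuit of `e ∉ B` with respect to a base `B` :
the unique circuit contained in `B ∪ {e}`. -/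
def fundCct (M : Matroid α) (B : Set α) (e : α) : Set α :=
  ⋂₀ {C | Cct M C ∧ C ⊆ insert e B}

/-- The fundamental cocircuit of `b ∈ B` with respect to a base `B` :
the unique cocircuit contained in `(E \ B) ∪ {b}`. -/
def fundCocct (M : Matroid α) (B : Set α) (b : α) : Set α :=
  ⋂₀ {C | Cocct M C ∧ C ⊆ insert b (M.E \ B)}

/-- The set of internally active elements of a base `B` :
elements `b ∈ B` that are the minimum of their fundamental cocircuit. -/
def ActInt [LinearOrder α] (M : Matroid α) (B : Set α) : Set α :=
  {b ∈ B | IsLeast (fundCocct M B b) b}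

/-- The set of externally active elements of a base `B` :
elements `e ∈ M.E \ B` that are the minimum of their fundamental circuit. -/
def ActExt [LinearOrder α] (M : Matroid α) (B : Set α) : Set α :=
  {e ∈ M.E \ B | IsLeast (fundCct M B e) e}

/-- A uniactive internal base : internal activity `1` and external activity `0`. -/
def UIntBase [LinearOrder α] (M : Matroid α) (B : Set α) : Prop :=
  M.IsBase B ∧ (ActInt M B).ncard = 1 ∧ (ActExt M B).ncard = 0

/-- A uniactive external base : internal activity `0` and external activity `1`. -/
def UExtBase [LinearOrder α] (M : Matroid α) (B : Set α) : Prop :=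
  M.IsBase B ∧ (ActInt M B).ncard = 0 ∧ (ActExt M B).ncard = 1

/-- `β(M)` : the number of uniactive internal bases. -/
noncomputable def beta [LinearOrder α] (M : Matroid α) : ℕ :=
  {B : Set α | UIntBase M B}.ncard

/-- `β*(M)` : the number of uniactive external bases. -/
noncomputable def betaStar [LinearOrder α] (M : Matroid α) : ℕ :=
  {B : Set α | UExtBase M B}.ncard

/-- A connected matroid : any two elements of the ground set lie on a common circuit. -/
def Conn (M : Matroid α) : Prop :=
  M.E.Nonempty ∧ ∀ ⦃x y⦄, x ∈ M.E → y ∈ M.E →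
    (x = y ∨ ∃ C, Cct M C ∧ x ∈ C ∧ y ∈ C)

/-- A matroid consisting of a single loop. -/
def IsLoopMatroid (M : Matroid α) : Prop := ∃ e, M.E = {e} ∧ M.Dep {e}

/-- A matroid consisting of a single coloop (isthmus). -/
def IsColoopMatroid (M : Matroid α) : Prop := ∃ e, M.E = {e} ∧ M.Indep {e}

/-- A flat : a subset of the ground set whose complement is a union of cocircuits. -/
def IsFlat (M : Matroid α) (F : Set α) : Prop :=
  F ⊆ M.E ∧ ∃ S : Set (Set α), (∀ C ∈ S, Cocct M C) ∧ M.E \ F = ⋃₀ S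

/-- A dual-flat : a union of circuits. -/
def IsDualFlat (M : Matroid α) (F : Set α) : Prop :=
  ∃ S : Set (Set α), (∀ C ∈ S, Cct M C) ∧ F = ⋃₀ S

/-- A cyclic flat : both a flat and a dual-flat. -/
def IsCyclicFlat (M : Matroid α) (F : Set α) : Prop :=
  IsFlat M F ∧ IsDualFlat M F

/-- The data of a filtration : `∅ = F'_ε ⊂ ⋯ ⊂ F'_0 = F_c = F_0 ⊂ ⋯ ⊂ F_ι = E`. -/
structure Filtration (α : Type*) where
  ι : ℕ
  ε : ℕ
  F : Fin (ι + 1) → Set α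
  F' : Fin (ε + 1) → Set α

/-- The `k`-th internal minor `M(F_k)/F_{k-1}` induced by a filtration. -/
def intMinor (M : Matroid α) (f : Filtration α) (k : Fin f.ι) : Matroid α :=
  minor M (f.F k.succ) (f.F k.castSucc)

/-- The `k`-th external minor `M(F'_{k-1})/F'_k` induced by a filtration. -/
def extMinor (M : Matroid α) (f : Filtration α) (k : Fin f.ε) : Matroid α :=
  minor M (f.F' k.castSucc) (f.F' k.succ)

/-- The filtration property : strictly nested subsets from `∅` to `M.E` through `F_c`,
with the minima of the successive differences increasing on each side of `F_c`. -/
def IsFiltration [LinearOrder α] (M : Matroid α) (f : Filtration α) : Prop :=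
  f.F' (Fin.last f.ε) = ∅ ∧
  f.F' 0 = f.F 0 ∧
  f.F (Fin.last f.ι) = M.E ∧
  (∀ k : Fin f.ι, f.F k.castSucc ⊂ f.F k.succ) ∧
  (∀ k : Fin f.ε, f.F' k.succ ⊂ f.F' k.castSucc) ∧
  (∀ j k : Fin f.ι, j < k → ∀ a b : α,
    IsLeast (f.F j.succ \ f.F j.castSucc) a →
    IsLeast (f.F k.succ \ f.F k.castSucc) b → a < b) ∧
  (∀ j k : Fin f.ε, j < k → ∀ a b : α,
    IsLeast (f.F' j.castSucc \ f.F' j.succ) a →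
    IsLeast (f.F' k.castSucc \ f.F' k.succ) b → a < b)

/-- A connected filtration : a filtration all of whose induced internal minors are
connected and not single loops, and all of whose induced external minors are connected
and not single coloops. -/
def IsConnFiltration [LinearOrder α] (M : Matroid α) (f : Filtration α) : Prop :=
  IsFiltration M f ∧
  (∀ k : Fin f.ι, Conn (intMinor M f k) ∧ ¬ IsLoopMatroid (intMinor M f k)) ∧
  (∀ k : Fin f.ε, Conn (extMinor M f k) ∧ ¬ IsColoopMatroid (extMinor M f k))

/-- An active filtration of a base `B` : a filtration such that `B` induces a uniactive
internal base of each internal minor and a uniactive external base of each external minor. -/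
def IsActiveFiltration [LinearOrder α] (M : Matroid α) (B : Set α) (f : Filtration α) : Prop :=
  IsFiltration M f ∧
  (∀ k : Fin f.ι, UIntBase (intMinor M f k) (B ∩ (f.F k.succ \ f.F k.castSucc))) ∧
  (∀ k : Fin f.ε, UExtBase (extMinor M f k) (B ∩ (f.F' k.castSucc \ f.F' k.succ)))

/-- The subset `F(X)` attached to a base `B` and a set `X` of internally active elements :
`B ∩ F` is a base of `M(F)`, the activities of the induced bases of `M(F)` and `M/F`
split those of `B`, with `Int` of the contraction part equal to `X`. -/
def DecompSet [LinearOrder α] (M : Matroid α) (B X F : Set α) : Prop :=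
  F ⊆ M.E ∧
  (M ↾ F).IsBase (B ∩ F) ∧
  ActInt (M ↾ F) (B ∩ F) = ActInt M B \ X ∧
  ActExt (M ↾ F) (B ∩ F) = ActExt M B ∧
  ActInt (con M F) (B \ F) = X ∧
  ActExt (con M F) (B \ F) = ∅

/-- The dual of a filtration : complement every subset and exchange the two sides. -/
def dualFil (M : Matroid α) (f : Filtration α) : Filtration α :=
  ⟨f.ε, f.ι, fun k => M.E \ f.F' k, fun k => M.E \ f.F k⟩

/-- The set of subsets occurring in a filtration. -/
def termsOf (f : Filtration α) : Set (Set α) :=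
  {H | ∃ k, f.F k = H} ∪ {H | ∃ k, f.F' k = H}

end ActiveBij

namespace ActiveBij

lemma _root_.Set.Finite.exists_minimal_wrt {β γ : Type*} [PartialOrder γ] (f : β → γ)
    (s : Set β) (h : s.Finite) (hs : s.Nonempty) :
    ∃ a ∈ s, ∀ a' ∈ s, f a' ≤ f a → f a = f a' := by
  obtain ⟨a, ha, hmin⟩ := h.exists_minimalFor f s hs
  exact ⟨a, ha, fun a' ha' hle => le_antisymm (hmin ha' hle) hle⟩

section Aux

variable {M : Matroid α} {B F G C C₁ C₂ D I J K X Y : Set α} {e b x y : α}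

lemma dualFinite [M.Finite] : M✶.Finite := ⟨by rw [dual_ground]; exact M.ground_finite⟩

lemma Cct.dep (h : Cct M C) : M.Dep C := h.1

lemma Cct.subset_ground (h : Cct M C) : C ⊆ M.E := h.1.subset_ground

lemma Cct.diff_singleton_indep (h : Cct M C) (he : e ∈ C) : M.Indep (C \ {e}) := by
  by_contra hi
  have hdep : M.Dep (C \ {e}) := ⟨hi, diff_subset.trans h.subset_ground⟩
  exact (h.2 hdep diff_subset he).2 rfl

lemma Cct.mem_closure_diff (h : Cct M C) (he : e ∈ C) : e ∈ M.closure (C \ {e}) := by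
  rw [(h.diff_singleton_indep he).mem_closure_iff]
  left
  rw [insert_diff_singleton, insert_eq_of_mem he]
  exact h.dep

lemma exists_cct_subset [M.Finite] (hD : M.Dep D) : ∃ C, Cct M C ∧ C ⊆ D := by
  have hfin : {C | M.Dep C ∧ C ⊆ D}.Finite :=
    ((M.set_finite D hD.subset_ground).finite_subsets).subset fun C hC => hC.2
  obtain ⟨C, hC, hmin⟩ := Set.Finite.exists_minimal_wrt id _ hfin ⟨D, hD, Subset.rfl⟩
  exact ⟨C, ⟨hC.1, fun y hy hyC => (hmin y ⟨hy, hyC.trans hC.2⟩ hyC).subset⟩, hC.2⟩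

lemma cct_eq_of_subset_insert (hI : M.Indep I) (hC1 : Cct M C₁) (hC2 : Cct M C₂)
    (h1 : C₁ ⊆ insert e I) (h2 : C₂ ⊆ insert e I) : C₁ = C₂ := by
  have hmem : ∀ {C : Set α}, Cct M C → C ⊆ insert e I → e ∈ C := by
    intro C hC hCs
    by_contra he
    exact hC.dep.1 (hI.subset fun x hx => ((hCs hx).resolve_left (fun h => he (h ▸ hx))))
  have key : ∀ {Ca Cb : Set α}, Cct M Ca → Cct M Cb → Ca ⊆ insert e I → Cb ⊆ insert e I →
      Ca ⊆ Cb := by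
    intro Ca Cb hCa hCb hsa hsb x hx
    by_contra hxCb
    have hxe : x ≠ e := fun h => hxCb (h ▸ hmem hCb hsb)
    have hxI : x ∈ I := (hsa hx).resolve_left hxe
    have heCb : e ∈ M.closure (I \ {x}) := by
      refine M.closure_subset_closure ?_ (hCb.mem_closure_diff (hmem hCb hsb))
      intro z hz
      rcases hsb hz.1 with rfl | hzI
      · exact absurd rfl hz.2
      · exact ⟨hzI, fun h => hxCb (h ▸ hz.1)⟩
    have hxcl : x ∈ M.closure (I \ {x}) := by
      have h1' : Ca \ {x} ⊆ insert e (I \ {x}) := by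
        intro z hz
        rcases hsa hz.1 with rfl | hzI
        · exact mem_insert _ _
        · exact mem_insert_of_mem _ ⟨hzI, hz.2⟩
      have := M.closure_subset_closure h1' (hCa.mem_closure_diff hx)
      rwa [closure_insert_eq_of_mem_closure heCb] at this
    exact (indep_iff_forall_notMem_closure_diff hI.subset_ground).mp hI hxI hxcl
  exact (key hC1 hC2 h1 h2).antisymm (key hC2 hC1 h2 h1)

lemma fundCct_eq_of (hI : M.Indep B) (hC : Cct M C) (hCB : C ⊆ insert e B) :
    fundCct M B e = C := by
  have hset : {D | Cct M D ∧ D ⊆ insert e B} = {C} := by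
    ext D
    simp only [mem_setOf_eq, mem_singleton_iff]
    exact ⟨fun h => cct_eq_of_subset_insert hI h.1 hC h.2 hCB, fun h => h ▸ ⟨hC, hCB⟩⟩
  simp only [fundCct, hset, sInter_singleton]

lemma exists_fundCct [M.Finite] (hB : M.IsBase B) (he : e ∈ M.E \ B) :
    Cct M (fundCct M B e) ∧ fundCct M B e ⊆ insert e B ∧ e ∈ fundCct M B e := by
  obtain ⟨C, hC, hCs⟩ := exists_cct_subset (hB.insert_dep he)
  have heq := fundCct_eq_of hB.indep hC hCs
  have heC : e ∈ C := by
    by_contra h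
    exact hC.dep.1 (hB.indep.subset fun x hx => (hCs hx).resolve_left fun hh => h (hh ▸ hx))
  rw [heq]; exact ⟨hC, hCs, heC⟩

lemma cocct_compl_closure (hB : M.IsBase B) (hb : b ∈ B) :
    Cct M✶ (M.E \ M.closure (B \ {b})) := by
  have hbK : b ∈ M.E \ M.closure (B \ {b}) := ⟨hB.subset_ground hb,
    (indep_iff_forall_notMem_closure_diff hB.subset_ground).mp hB.indep hb⟩
  have hKE : M.E \ M.closure (B \ {b}) ⊆ M.E := diff_subset
  constructor
  · refine ⟨fun h => ?_, hKE⟩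
    rw [dual_indep_iff_exists hKE] at h
    obtain ⟨B', hB', hdisj⟩ := h
    have hB'cl : B' ⊆ M.closure (B \ {b}) := by
      intro z hz
      by_contra hzcl
      exact (disjoint_right.mp hdisj hz) ⟨hB'.subset_ground hz, hzcl⟩
    have : M.E ⊆ M.closure (B \ {b}) := by
      rw [← hB'.closure_eq]
      exact closure_subset_closure_of_subset_closure hB'cl
    exact hbK.2 (this hbK.1)
  · intro y hy hyK
    by_contra hns
    obtain ⟨x, hxK, hxy⟩ := not_subset.mp hns
    have hBx : M.IsBase (insert x (B \ {b})) := by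
      by_cases hxb : x = b
      · subst hxb
        rwa [insert_diff_singleton, insert_eq_of_mem hb]
      · have hxB : x ∉ B := fun h =>
          hxK.2 (M.subset_closure _ (diff_subset.trans hB.subset_ground) ⟨h, hxb⟩)
        exact hB.exchange_isBase_of_indep hxB
          (((hB.indep.subset diff_subset).insert_indep_iff_of_notMem
            (fun h => hxB h.1)).mpr ⟨hxK.1, hxK.2⟩)
    have hyE : y ⊆ M.E := hy.subset_ground
    refine hy.1 ((dual_indep_iff_exists hyE).mpr ⟨insert x (B \ {b}), hBx, ?_⟩)
    rw [disjoint_left]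
    intro z hz
    have hzK := hyK hz
    rw [mem_insert_iff]
    rintro (rfl | hzB)
    · exact hxy hz
    · exact hzK.2 (M.subset_closure _ (diff_subset.trans hB.subset_ground) hzB)

lemma fundCocct_eq (hB : M.IsBase B) (hb : b ∈ B) :
    fundCocct M B b = M.E \ M.closure (B \ {b}) := by
  have hKc := cocct_compl_closure hB hb
  have hKs : M.E \ M.closure (B \ {b}) ⊆ insert b (M.E \ B) := by
    intro x hx
    by_cases hxB : x ∈ B
    · by_cases hxb : x = b
      · exact hxb ▸ mem_insert _ _
      · exact absurd (M.subset_closure _ (diff_subset.trans hB.subset_ground) ⟨hxB, hxb⟩) hx.2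
    · exact mem_insert_of_mem _ ⟨hx.1, hxB⟩
  have hset : {C | Cocct M C ∧ C ⊆ insert b (M.E \ B)} = {M.E \ M.closure (B \ {b})} := by
    ext D
    simp only [mem_setOf_eq, mem_singleton_iff]
    exact ⟨fun h => cct_eq_of_subset_insert hB.compl_isBase_dual.indep h.1 hKc h.2 hKs,
      fun h => h ▸ ⟨hKc, hKs⟩⟩
  simp only [fundCocct, hset, sInter_singleton]

lemma mem_fundCocct (hB : M.IsBase B) (hb : b ∈ B) : b ∈ fundCocct M B b := by
  rw [fundCocct_eq hB hb]
  exact ⟨hB.subset_ground hb,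
    (indep_iff_forall_notMem_closure_diff hB.subset_ground).mp hB.indep hb⟩

lemma fundCocct_subset (hB : M.IsBase B) (hb : b ∈ B) :
    fundCocct M B b ⊆ insert b (M.E \ B) := by
  rw [fundCocct_eq hB hb]
  intro x hx
  by_cases hxB : x ∈ B
  · by_cases hxb : x = b
    · exact hxb ▸ mem_insert _ _
    · exact absurd (M.subset_closure _ (diff_subset.trans hB.subset_ground) ⟨hxB, hxb⟩) hx.2
  · exact mem_insert_of_mem _ ⟨hx.1, hxB⟩

lemma pairing [M.Finite] (hB : M.IsBase B) (hb : b ∈ B) (he : e ∈ M.E \ B) :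
    b ∈ fundCct M B e ↔ e ∈ fundCocct M B b := by
  rw [fundCocct_eq hB hb]
  constructor
  · intro hbC
    refine ⟨he.1, fun hecl => ?_⟩
    have hdep : M.Dep (insert e (B \ {b})) :=
      ((hB.indep.subset diff_subset).insert_dep_iff).mpr ⟨hecl, fun h => he.2 h.1⟩
    obtain ⟨C', hC', hCs'⟩ := exists_cct_subset hdep
    have heq := fundCct_eq_of hB.indep hC' (hCs'.trans (insert_subset_insert diff_subset))
    rw [← heq] at hCs'
    rcases hCs' hbC with h | h
    · exact he.2 (h ▸ hb)
    · exact h.2 rfl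
  · intro hecl
    by_contra hbC
    obtain ⟨hCc, hCs, heC⟩ := exists_fundCct hB he
    have h1 : fundCct M B e \ {e} ⊆ B \ {b} := by
      intro z hz
      rcases hCs hz.1 with h | h
      · exact absurd h hz.2
      · exact ⟨h, fun hzb => hbC (hzb ▸ hz.1)⟩
    exact hecl.2 (M.closure_subset_closure h1 (hCc.mem_closure_diff heC))

@[simp] lemma con_ground (M : Matroid α) (F : Set α) : (con M F).E = M.E \ F := rfl

lemma fundCct_subset_insert_of_closure [M.Finite] (hB : M.IsBase B) {S : Set α}
    (hecl : e ∈ M.closure (B ∩ S)) (heB : e ∉ B) :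
    fundCct M B e ⊆ insert e (B ∩ S) := by
  have hdep : M.Dep (insert e (B ∩ S)) :=
    ((hB.indep.subset inter_subset_left).insert_dep_iff).mpr ⟨hecl, fun h => heB h.1⟩
  obtain ⟨C', hC', hCs'⟩ := exists_cct_subset hdep
  rw [fundCct_eq_of hB.indep hC' (hCs'.trans (insert_subset_insert inter_subset_left))]
  exact hCs'

lemma indep_union_of_basis_basis [M.Finite] (hI : M.IsBasis I F) (hJ : M.IsBasis J F)
    (hXF : Disjoint X F) (hXI : M.Indep (X ∪ I)) : M.Indep (X ∪ J) := by
  have hXE : X ⊆ M.E := subset_union_left.trans hXI.subset_ground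
  have hXFE : X ∪ F ⊆ M.E := union_subset hXE hI.subset_ground
  have hbas : M.IsBasis (X ∪ I) (X ∪ F) := by
    refine hXI.isBasis_of_subset_of_subset_closure (union_subset_union_right X hI.subset) ?_
    refine union_subset (subset_union_left.trans (M.subset_closure _ hXI.subset_ground)) ?_
    exact hI.subset_closure.trans (M.closure_subset_closure subset_union_right)
  obtain ⟨K, hK, hJK⟩ := hJ.indep.subset_isBasis_of_subset (hJ.subset.trans subset_union_right) hXFE
  have hKF : J = K ∩ F :=
    hJ.eq_of_subset_indep (hK.indep.subset inter_subset_left)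
      (subset_inter hJK hJ.subset) inter_subset_right
  have hcard1 : K.encard = X.encard + I.encard := by
    rw [hK.encard_eq_encard hbas, encard_union_eq (disjoint_of_subset_right hI.subset hXF)]
  have hIJcard : I.encard = J.encard := hI.encard_eq_encard hJ
  have hsplit : (K \ F).encard + J.encard = K.encard := by
    rw [hKF, encard_diff_add_encard_inter]
  have hJfin : J.encard ≠ ⊤ := (M.set_finite J hJ.indep.subset_ground).encard_lt_top.ne
  have hKFX : (K \ F).encard = X.encard := by
    apply WithTop.add_right_cancel hJfin
    exact hsplit.trans (by rw [hcard1, hIJcard]; rfl)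
  have hKX : K \ F = X := by
    refine (M.set_finite (K \ F) (diff_subset.trans hK.indep.subset_ground)).eq_of_subset_of_encard_le ?_ hKFX.symm.le
    intro z hz
    exact (hK.subset hz.1).resolve_right hz.2
  have : X ∪ J = K := by rw [← hKX, hKF]; exact diff_union_inter K F
  rw [this]
  exact hK.indep

lemma con_indep_iff [M.Finite] (hF : F ⊆ M.E) (hI : M.IsBasis I F) :
    (con M F).Indep X ↔ X ⊆ M.E \ F ∧ M.Indep (X ∪ I) := by
  constructor
  · intro h
    have hXg : X ⊆ M.E \ F := h.subset_ground
    rw [con, dual_indep_iff_exists'] at h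
    obtain ⟨hXE, Bd, hBd, hdisj⟩ := h
    rw [del, isBase_restrict_iff diff_subset] at hBd
    obtain ⟨Bs, hBs, hBdBs⟩ := hBd.indep.exists_isBase_superset
    have hBsF : Bd = Bs ∩ (M✶.E \ F) :=
      hBd.eq_of_subset_indep (hBs.indep.subset inter_subset_left)
        (subset_inter hBdBs hBd.subset) inter_subset_right
    have hMbase : M.IsBase (M.E \ Bs) := hBs.compl_isBase_of_dual
    have hbasisF : M.IsBasis ((M.E \ Bs) ∩ F) F := by
      have h2 := hBs.compl_inter_isBasis_of_inter_isBasis (hBsF ▸ hBd)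
      simpa [dual_dual, diff_diff_cancel_left hF] using h2
    have hXBs : Disjoint X Bs := by
      rw [disjoint_left]
      intro z hzX hzBs
      exact disjoint_left.mp hdisj hzX (hBsF ▸ ⟨hzBs, hXg hzX⟩)
    have hind : M.Indep (X ∪ ((M.E \ Bs) ∩ F)) :=
      hMbase.indep.subset (union_subset (subset_diff.mpr ⟨hXg.trans diff_subset, hXBs⟩)
        inter_subset_left)
    refine ⟨hXg, indep_union_of_basis_basis hbasisF hI ?_ hind⟩
    exact disjoint_left.mpr fun z hz => (hXg hz).2
  · rintro ⟨hXg, hind⟩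
    obtain ⟨B₁, hB₁, hsub⟩ := hind.exists_isBase_superset
    have hB₁F : M.IsBasis (B₁ ∩ F) F := by
      have heq : I = B₁ ∩ F :=
        hI.eq_of_subset_indep (hB₁.indep.subset inter_subset_left)
          (subset_inter (subset_union_right.trans hsub) hI.subset) inter_subset_right
      exact heq ▸ hI
    have hdb := hB₁.compl_inter_isBasis_of_inter_isBasis hB₁F
    rw [con, dual_indep_iff_exists']
    refine ⟨hXg, (M.E \ B₁) ∩ (M.E \ F), ?_, ?_⟩
    · rw [del, isBase_restrict_iff (show M✶.E \ F ⊆ M✶.E from diff_subset)]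
      exact hdb
    · rw [disjoint_left]
      intro z hzX hz2
      exact hz2.1.2 (hsub (Or.inl hzX))

lemma con_base [M.Finite] (hB : M.IsBase B) (hF : F ⊆ M.E) (hBF : M.IsBasis (B ∩ F) F) :
    (con M F).IsBase (B \ F) := by
  rw [isBase_iff_maximal_indep]
  constructor
  · rw [con_indep_iff hF hBF]
    exact ⟨diff_subset_diff_left hB.subset_ground, by rw [diff_union_inter]; exact hB.indep⟩
  · intro X hX hBX
    rw [con_indep_iff hF hBF] at hX
    have hBsub : B ⊆ X ∪ (B ∩ F) := by
      intro z hz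
      by_cases hzF : z ∈ F
      · exact Or.inr ⟨hz, hzF⟩
      · exact Or.inl (hBX ⟨hz, hzF⟩)
    have hXB := hB.eq_of_subset_indep hX.2 hBsub
    intro z hz
    exact ⟨by rw [hXB]; exact Or.inl hz, (hX.1 hz).2⟩

lemma cct_restrict_iff (hX : X ⊆ M.E) : Cct (M ↾ X) C ↔ Cct M C ∧ C ⊆ X := by
  constructor
  · intro h
    have hCX : C ⊆ X := h.1.subset_ground
    have hdep : M.Dep C := ⟨(restrict_dep_iff.mp h.1).1, hCX.trans hX⟩
    exact ⟨⟨hdep, fun y hy hyC => h.2 (restrict_dep_iff.mpr ⟨hy.1, hyC.trans hCX⟩) hyC⟩, hCX⟩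
  · rintro ⟨h, hCX⟩
    refine ⟨restrict_dep_iff.mpr ⟨h.dep.1, hCX⟩, fun y hy hyC => ?_⟩
    exact h.2 ⟨(restrict_dep_iff.mp hy).1, (hyC.trans hCX).trans hX⟩ hyC

lemma fundCct_con_eq [M.Finite] (hB : M.IsBase B) (hF : F ⊆ M.E) (hBF : M.IsBasis (B ∩ F) F)
    (he : e ∈ M.E \ (B ∪ F)) :
    fundCct (con M F) (B \ F) e = fundCct M B e \ F := by
  have heB : e ∉ B := fun h => he.2 (Or.inl h)
  have heF : e ∉ F := fun h => he.2 (Or.inr h)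
  obtain ⟨hCc, hCs, heC⟩ := exists_fundCct hB ⟨he.1, heB⟩
  set C := fundCct M B e with hCdef
  have hCsub : C ⊆ (C \ F) ∪ (B ∩ F) := by
    intro z hz
    by_cases hzF : z ∈ F
    · exact Or.inr ⟨(hCs hz).resolve_left (by rintro rfl; exact heF hzF), hzF⟩
    · exact Or.inl ⟨hz, hzF⟩
  have hCdFs : C \ F ⊆ insert e (B \ F) := by
    intro z hz
    rcases hCs hz.1 with rfl | hzB
    · exact mem_insert _ _
    · exact mem_insert_of_mem _ ⟨hzB, hz.2⟩
  have hdep_to : ∀ {y : Set α}, y ⊆ insert e (B \ F) → (con M F).Dep y → C \ F ⊆ y := by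
    intro y hys hy
    have hyE : y ⊆ M.E \ F := hy.subset_ground
    have hni : ¬ M.Indep (y ∪ (B ∩ F)) := fun hi =>
      hy.1 ((con_indep_iff hF hBF).mpr ⟨hyE, hi⟩)
    have hdep : M.Dep (y ∪ (B ∩ F)) :=
      ⟨hni, union_subset (hyE.trans diff_subset) (inter_subset_left.trans hB.subset_ground)⟩
    obtain ⟨C', hC', hC's⟩ := exists_cct_subset hdep
    have hC'i : C' ⊆ insert e B := hC's.trans (union_subset
      (hys.trans (insert_subset_insert diff_subset))
      (fun z hz => mem_insert_of_mem _ hz.1))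
    have hCC : C' = C := cct_eq_of_subset_insert hB.indep hC' hCc hC'i hCs
    intro z hz
    have : z ∈ y ∪ (B ∩ F) := hC's (hCC ▸ hz.1)
    rcases this with h | h
    · exact h
    · exact absurd h.2 hz.2
  have hdep0 : (con M F).Dep (C \ F) := by
    refine ⟨fun hi => ?_, ?_⟩
    · rw [con_indep_iff hF hBF] at hi
      exact hCc.dep.1 (hi.2.subset hCsub)
    · rw [con_ground]
      exact fun z hz => ⟨hCc.subset_ground hz.1, hz.2⟩
  have hcct0 : Cct (con M F) (C \ F) :=
    ⟨hdep0, fun y hy hyC => hdep_to (hyC.trans hCdFs) hy⟩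
  have hset : {D | Cct (con M F) D ∧ D ⊆ insert e (B \ F)} = {C \ F} := by
    ext D
    simp only [mem_setOf_eq, mem_singleton_iff]
    constructor
    · rintro ⟨hD, hDs⟩
      exact (hD.2 hdep0 (hdep_to hDs hD.dep)).antisymm (hdep_to hDs hD.dep)
    · rintro rfl
      exact ⟨hcct0, hCdFs⟩
  simp only [fundCct, hset, sInter_singleton]

lemma fundCocct_con_eq [M.Finite] (hB : M.IsBase B) (hF : F ⊆ M.E) (hBF : M.IsBasis (B ∩ F) F)
    (hb : b ∈ B \ F) : fundCocct (con M F) (B \ F) b = fundCocct M B b := by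
  haveI := dualFinite (M := M)
  have hKeq := fundCocct_eq hB hb.1
  have hKF : Disjoint (fundCocct M B b) F := by
    rw [hKeq, disjoint_left]
    intro z hz hzF
    refine hz.2 (M.closure_subset_closure ?_ (hBF.subset_closure hzF))
    intro w hw
    exact ⟨hw.1, fun h => hb.2 (h ▸ hw.2)⟩
  have hKcocct : Cct M✶ (fundCocct M B b) := hKeq ▸ cocct_compl_closure hB hb.1
  have hKsub : fundCocct M B b ⊆ insert b (M.E \ B) := fundCocct_subset hB hb.1
  have hKE : fundCocct M B b ⊆ M.E := by rw [hKeq]; exact diff_subset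
  have hdualeq : (con M F)✶ = M✶ ↾ (M.E \ F) := by rw [con, dual_dual]; rfl
  have hset : {D | Cocct (con M F) D ∧ D ⊆ insert b ((con M F).E \ (B \ F))}
      = {fundCocct M B b} := by
    ext D
    simp only [mem_setOf_eq, mem_singleton_iff]
    constructor
    · rintro ⟨hD, hDs⟩
      have hD' : Cct M✶ D ∧ D ⊆ M.E \ F := by
        rw [← cct_restrict_iff (show M.E \ F ⊆ M✶.E from diff_subset), ← hdualeq]
        exact hD
      refine cct_eq_of_subset_insert hB.compl_isBase_dual.indep hD'.1 hKcocct ?_ hKsub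
      intro z hz
      rcases hDs hz with rfl | hz2
      · exact mem_insert _ _
      · rw [con_ground] at hz2
        refine mem_insert_of_mem _ ⟨hz2.1.1, fun hzB => hz2.2 ⟨hzB, hz2.1.2⟩⟩
    · rintro rfl
      constructor
      · show Cct (con M F)✶ _
        rw [hdualeq, cct_restrict_iff (show M.E \ F ⊆ M✶.E from diff_subset)]
        exact ⟨hKcocct, subset_diff.mpr ⟨hKE, hKF⟩⟩
      · intro z hz
        rcases hKsub hz with rfl | hz2
        · exact mem_insert _ _
        · refine mem_insert_of_mem _ ?_
          rw [con_ground]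
          exact ⟨⟨hz2.1, disjoint_left.mp hKF hz⟩, fun h => hz2.2 h.1⟩
  simp only [fundCocct, hset, sInter_singleton]

lemma fundCct_restrict_eq [M.Finite] (hB : M.IsBase B) (hF : F ⊆ M.E)
    (hsp : F ⊆ M.closure (B ∩ F)) (he : e ∈ F \ B) :
    fundCct (M ↾ F) (B ∩ F) e = fundCct M B e ∧ fundCct M B e ⊆ insert e (B ∩ F) := by
  have hins := fundCct_subset_insert_of_closure hB (hsp he.1) he.2
  obtain ⟨hCc, hCs, heC⟩ := exists_fundCct hB ⟨hF he.1, he.2⟩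
  have hCF : fundCct M B e ⊆ F := hins.trans (insert_subset he.1 inter_subset_right)
  have hset : {D | Cct (M ↾ F) D ∧ D ⊆ insert e (B ∩ F)} = {fundCct M B e} := by
    ext D
    simp only [mem_setOf_eq, mem_singleton_iff]
    constructor
    · rintro ⟨hD, hDs⟩
      obtain ⟨hDc, -⟩ := (cct_restrict_iff hF).mp hD
      exact cct_eq_of_subset_insert hB.indep hDc hCc
        (hDs.trans (insert_subset_insert inter_subset_left)) hCs
    · rintro rfl
      exact ⟨(cct_restrict_iff hF).mpr ⟨hCc, hCF⟩, hins⟩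
  constructor
  · simp only [fundCct, hset, sInter_singleton]
  · exact hins

lemma fundCocct_def' (N : Matroid α) (X : Set α) (b : α) :
    fundCocct N X b = fundCct N✶ (N.E \ X) b := rfl

lemma fundCocct_restrict_eq [M.Finite] (hB : M.IsBase B) (hF : F ⊆ M.E) (hBF : M.IsBasis (B ∩ F) F)
    (hb : b ∈ B ∩ F) : fundCocct (M ↾ F) (B ∩ F) b = fundCocct M B b ∩ F := by
  haveI := dualFinite (M := M)
  have hdB : M✶.IsBase (M.E \ B) := hB.compl_isBase_dual
  have hdBF : M✶.IsBasis ((M.E \ B) ∩ (M.E \ F)) (M.E \ F) :=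
    hB.compl_inter_isBasis_of_inter_isBasis hBF
  have hbmem : b ∈ M✶.E \ ((M.E \ B) ∪ (M.E \ F)) := by
    refine ⟨hB.subset_ground hb.1, ?_⟩
    rintro (h | h)
    · exact h.2 hb.1
    · exact h.2 hb.2
  have hmain := fundCct_con_eq (M := M✶) hdB diff_subset hdBF hbmem
  have hcon : con M✶ (M.E \ F) = (M ↾ F)✶ := by
    simp only [con, del, dual_dual, dual_ground]
    rw [diff_diff_cancel_left hF]
  have hsets1 : (M.E \ B) \ (M.E \ F) = F \ B := by
    ext z
    simp only [mem_diff, not_and, not_not]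
    constructor
    · rintro ⟨⟨hzE, hzB⟩, h2⟩
      exact ⟨h2 hzE, hzB⟩
    · rintro ⟨hzF, hzB⟩
      exact ⟨⟨hF hzF, hzB⟩, fun _ => hzF⟩
  simp only [dual_ground] at hmain
  rw [hcon, hsets1] at hmain
  have hg : (M ↾ F).E \ (B ∩ F) = F \ B := by
    rw [restrict_ground_eq]
    ext z
    simp only [mem_diff, mem_inter_iff, not_and]
    constructor
    · rintro ⟨hzF, h2⟩
      exact ⟨hzF, fun hzB => h2 hzB hzF⟩
    · rintro ⟨hzF, hzB⟩
      exact ⟨hzF, fun h _ => hzB h⟩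
  have h1 : fundCocct (M ↾ F) (B ∩ F) b = fundCct (M ↾ F)✶ (F \ B) b := by
    rw [fundCocct_def', hg]
  have h2 : fundCct M✶ (M.E \ B) b = fundCocct M B b := rfl
  rw [h1, hmain, h2]
  have hKE : fundCocct M B b ⊆ M.E := by
    rw [fundCocct_eq hB hb.1]; exact diff_subset
  ext z
  simp only [mem_diff, mem_inter_iff, not_and, not_not]
  constructor
  · rintro ⟨hzK, h2⟩
    exact ⟨hzK, h2 (hKE hzK)⟩
  · rintro ⟨hzK, hzF⟩
    exact ⟨hzK, fun _ => hzF⟩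

lemma loop_fundCct_con [M.Finite] (hB : M.IsBase B) (hF : F ⊆ M.E) (hBF : M.IsBasis (B ∩ F) F)
    (heE : e ∈ M.E) (heB : e ∉ B) (heF : e ∉ F) (hecl : e ∈ M.closure (B ∩ F)) :
    fundCct (con M F) (B \ F) e = {e} := by
  have hdep : (con M F).Dep {e} := by
    refine ⟨fun hi => ?_, by rw [con_ground]; exact singleton_subset_iff.mpr ⟨heE, heF⟩⟩
    rw [con_indep_iff hF hBF] at hi
    have : M.Dep (insert e (B ∩ F)) :=
      ((hB.indep.subset inter_subset_left).insert_dep_iff).mpr ⟨hecl, fun h => heB h.1⟩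
    rw [singleton_union] at hi
    exact this.1 hi.2
  have hcct : Cct (con M F) {e} := by
    refine ⟨hdep, fun y hy hyC => ?_⟩
    rcases subset_singleton_iff_eq.mp hyC with rfl | rfl
    · exact absurd (con M F).empty_indep hy.1
    · exact Subset.rfl
  have hset : {D | Cct (con M F) D ∧ D ⊆ insert e (B \ F)} = {{e}} := by
    ext D
    simp only [mem_setOf_eq, mem_singleton_iff]
    constructor
    · rintro ⟨hD, hDs⟩
      have heD : e ∈ D := by
        by_contra h
        have hDB : D ⊆ B \ F := fun z hz => (hDs hz).resolve_left (fun hh => h (hh ▸ hz))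
        refine hD.dep.1 ((con_indep_iff hF hBF).mpr ⟨?_, ?_⟩)
        · exact fun z hz => ⟨hB.subset_ground (hDB hz).1, (hDB hz).2⟩
        · exact hB.indep.subset (union_subset (hDB.trans diff_subset) inter_subset_left)
      exact (hD.2 hdep (singleton_subset_iff.mpr heD)).antisymm
        (singleton_subset_iff.mpr heD)
    · rintro rfl
      exact ⟨hcct, singleton_subset_iff.mpr (mem_insert _ _)⟩
  simp only [fundCct, hset, sInter_singleton]

section Order
variable [LinearOrder α]

/-- The characterization of the decomposition set. -/
def Good (M : Matroid α) (B F : Set α) : Prop :=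
  F ⊆ M.E ∧ M.IsBasis (B ∩ F) F ∧ ActExt M B ⊆ F ∧
    (∀ e ∈ M.E \ (B ∪ F), ∃ y ∈ fundCct M B e, y ∉ F ∧ y < e) ∧
    ActInt M B ∩ F = ∅ ∧
    (∀ b ∈ B ∩ F, ∃ y ∈ fundCocct M B b, y ∈ F ∧ y < b)

lemma mem_ActInt : b ∈ ActInt M B ↔ b ∈ B ∧ IsLeast (fundCocct M B b) b := Iff.rfl

lemma mem_ActExt : e ∈ ActExt M B ↔ e ∈ M.E \ B ∧ IsLeast (fundCct M B e) e := Iff.rfl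

lemma not_isLeast_of_lt {S : Set α} (hy : y ∈ S) (hlt : y < x) : ¬ IsLeast S x :=
  fun h => absurd (h.2 hy) (not_le.mpr hlt)

lemma exists_lt_of_not_isLeast {S : Set α} (hx : x ∈ S) (h : ¬ IsLeast S x) :
    ∃ y ∈ S, y < x := by
  by_contra hc
  push_neg at hc
  exact h ⟨hx, fun z hz => hc z hz⟩

lemma Good.decompSet [M.Finite] (hB : M.IsBase B) (hG : Good M B F) :
    DecompSet M B (ActInt M B) F := by
  obtain ⟨hFE, hBF, hExt, hbcond, hIntF, hdcond⟩ := hG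
  have hsp : F ⊆ M.closure (B ∩ F) := hBF.subset_closure
  refine ⟨hFE, (isBase_restrict_iff hFE).mpr hBF, ?_, ?_, ?_, ?_⟩
  · rw [diff_self]
    ext b
    simp only [mem_empty_iff_false, iff_false]
    rintro ⟨hbBF, hle⟩
    rw [fundCocct_restrict_eq hB hFE hBF hbBF] at hle
    obtain ⟨y, hyK, hyF, hylt⟩ := hdcond b hbBF
    exact not_isLeast_of_lt (S := fundCocct M B b ∩ F) ⟨hyK, hyF⟩ hylt hle
  · ext e
    constructor
    · rintro ⟨heg, hle⟩
      have heF : e ∈ F := heg.1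
      have heB : e ∉ B := fun h => heg.2 ⟨h, heF⟩
      obtain ⟨heq, -⟩ := fundCct_restrict_eq hB hFE hsp ⟨heF, heB⟩
      rw [heq] at hle
      exact ⟨⟨hFE heF, heB⟩, hle⟩
    · intro he
      have heF : e ∈ F := hExt he
      obtain ⟨heg, hle⟩ := he
      obtain ⟨heq, -⟩ := fundCct_restrict_eq hB hFE hsp ⟨heF, heg.2⟩
      exact ⟨⟨heF, fun h => heg.2 h.1⟩, heq ▸ hle⟩
  · ext b
    constructor
    · rintro ⟨hbBF, hle⟩
      rw [fundCocct_con_eq hB hFE hBF hbBF] at hle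
      exact ⟨hbBF.1, hle⟩
    · rintro ⟨hbB, hle⟩
      have hbF : b ∉ F := fun h => by
        have : b ∈ ActInt M B ∩ F := ⟨⟨hbB, hle⟩, h⟩
        rw [hIntF] at this
        exact this
      exact ⟨⟨hbB, hbF⟩, (fundCocct_con_eq hB hFE hBF ⟨hbB, hbF⟩).symm ▸ hle⟩
  · ext e
    simp only [mem_empty_iff_false, iff_false]
    rintro ⟨heg, hle⟩
    rw [con_ground] at heg
    have heF : e ∉ F := heg.1.2
    have heB : e ∉ B := fun h => heg.2 ⟨h, heF⟩
    have heM : e ∈ M.E \ (B ∪ F) := ⟨heg.1.1, fun h => h.elim heB heF⟩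
    rw [fundCct_con_eq hB hFE hBF heM] at hle
    obtain ⟨y, hyC, hyF, hylt⟩ := hbcond e heM
    exact not_isLeast_of_lt (S := fundCct M B e \ F) ⟨hyC, hyF⟩ hylt hle

lemma DecompSet.good [M.Finite] (hB : M.IsBase B) (hD : DecompSet M B (ActInt M B) F) :
    Good M B F := by
  obtain ⟨hFE, hbase, hInt1, hExt1, hInt2, hExt2⟩ := hD
  have hBF : M.IsBasis (B ∩ F) F := (isBase_restrict_iff hFE).mp hbase
  have hsp := hBF.subset_closure
  refine ⟨hFE, hBF, ?_, ?_, ?_, ?_⟩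
  · rw [← hExt1]
    rintro e ⟨heg, -⟩
    exact heg.1
  · intro e he
    have heB : e ∉ B := fun h => he.2 (Or.inl h)
    have heF : e ∉ F := fun h => he.2 (Or.inr h)
    have heCon : e ∈ (con M F).E \ (B \ F) :=
      ⟨by rw [con_ground]; exact ⟨he.1, heF⟩, fun h => heB h.1⟩
    have hfc := fundCct_con_eq hB hFE hBF he
    have hnot : e ∉ ActExt (con M F) (B \ F) := by rw [hExt2]; exact notMem_empty e
    obtain ⟨-, -, heC⟩ := exists_fundCct hB ⟨he.1, heB⟩
    have hmem : e ∈ fundCct M B e \ F := ⟨heC, heF⟩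
    have hnl : ¬ IsLeast (fundCct M B e \ F) e := fun h => hnot ⟨heCon, hfc.symm ▸ h⟩
    obtain ⟨y, hyS, hylt⟩ := exists_lt_of_not_isLeast hmem hnl
    exact ⟨y, hyS.1, hyS.2, hylt⟩
  · ext b
    simp only [mem_inter_iff, mem_empty_iff_false, iff_false, not_and]
    intro hbI hbF
    rw [← hInt2] at hbI
    exact hbI.1.2 hbF
  · intro b hb
    have heq := fundCocct_restrict_eq hB hFE hBF hb
    have hnot : b ∉ ActInt (M ↾ F) (B ∩ F) := by
      rw [hInt1, diff_self]; exact notMem_empty b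
    have hbK : b ∈ fundCocct M B b ∩ F := ⟨mem_fundCocct hB hb.1, hb.2⟩
    have hnl : ¬ IsLeast (fundCocct M B b ∩ F) b := fun h => hnot ⟨hb, heq.symm ▸ h⟩
    obtain ⟨y, hyS, hylt⟩ := exists_lt_of_not_isLeast hbK hnl
    exact ⟨y, hyS.1, hyS.2, hylt⟩

lemma good_aux [M.Finite] (hB : M.IsBase B) (hF : Good M B F) (hG : Good M B G)
    (hx : x ∈ F \ G) (hiff : ∀ y, y < x → (y ∈ F ↔ y ∈ G)) : False := by
  obtain ⟨hFE, hBF, hExtF, hbF, hIntF, hdF⟩ := hF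
  obtain ⟨hGE, hBG, hExtG, hbG, hIntG, hdG⟩ := hG
  by_cases hxB : x ∈ B
  · obtain ⟨y, hyK, hyF, hylt⟩ := hdF x ⟨hxB, hx.1⟩
    have hyG : y ∈ G := (hiff y hylt).mp hyF
    have hyB : y ∉ B := by
      rcases fundCocct_subset hB hxB hyK with h | h
      · exact absurd h (ne_of_lt hylt)
      · exact h.2
    have hyE : y ∈ M.E := hGE hyG
    have hxC : x ∈ fundCct M B y := (pairing hB hxB ⟨hyE, hyB⟩).mpr hyK
    have hsub := fundCct_subset_insert_of_closure hB (hBG.subset_closure hyG) hyB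
    rcases hsub hxC with h | h
    · exact absurd (h ▸ hylt) (lt_irrefl x)
    · exact hx.2 h.2
  · have hxE : x ∈ M.E := hFE hx.1
    obtain ⟨y, hyC, hyG, hylt⟩ := hbG x ⟨hxE, fun h => h.elim hxB hx.2⟩
    have hsub := fundCct_subset_insert_of_closure hB (hBF.subset_closure hx.1) hxB
    rcases hsub hyC with h | h
    · exact absurd (h ▸ hylt) (lt_irrefl x)
    · exact hyG ((hiff y hylt).mp h.2)

lemma good_eq [M.Finite] (hB : M.IsBase B) (hF : Good M B F) (hG : Good M B G) : F = G := by
  by_contra hne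
  have hT : ((F \ G) ∪ (G \ F)).Nonempty := by
    by_contra h
    rw [not_nonempty_iff_eq_empty, union_empty_iff] at h
    exact hne ((diff_eq_empty.mp h.1).antisymm (diff_eq_empty.mp h.2))
  have hfin : ((F \ G) ∪ (G \ F)).Finite :=
    ((M.ground_finite.subset hF.1).diff (t := G)).union ((M.ground_finite.subset hG.1).diff (t := F))
  obtain ⟨x, hx, hmin⟩ := Set.exists_min_image _ id hfin hT
  have hiff : ∀ y, y < x → (y ∈ F ↔ y ∈ G) := by
    intro y hy
    constructor <;> intro h <;> by_contra h'
    · exact absurd (hmin y (Or.inl ⟨h, h'⟩)) (not_le.mpr hy)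
    · exact absurd (hmin y (Or.inr ⟨h, h'⟩)) (not_le.mpr hy)
  rcases hx with hxFG | hxGF
  · exact good_aux hB hF hG hxFG hiff
  · exact good_aux hB hG hF hxGF (fun y hy => (hiff y hy).symm)

lemma good_exists [M.Finite] (hB : M.IsBase B) : ∃ F, Good M B F := by
  classical
  set P : Set α → Prop := fun F => F ⊆ M.E ∧ F ⊆ M.closure (B ∩ F) ∧ ActExt M B ⊆ F ∧
    ∀ e ∈ M.E \ (B ∪ F), ∃ y ∈ fundCct M B e, y ∉ F ∧ y < e with hP
  have hPE : P M.E := by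
    refine ⟨Subset.rfl, ?_, fun e he => he.1.1, fun e he => absurd (Or.inr he.1) he.2⟩
    rw [inter_eq_self_of_subset_left hB.subset_ground, hB.closure_eq]
  have hfam : {F | P F}.Finite := M.ground_finite.finite_subsets.subset fun F hF => hF.1
  obtain ⟨F₀, hF₀, hmin⟩ := Set.Finite.exists_minimal_wrt id _ hfam ⟨M.E, hPE⟩
  obtain ⟨hF₀E, hsp, hExt, hbcond⟩ := hF₀
  set V := {b | b ∈ B ∩ F₀ ∧ ∀ y ∈ fundCocct M B b ∩ F₀, b ≤ y} with hV
  by_cases hVemp : V = ∅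
  · refine ⟨F₀, hF₀E,
      (hB.indep.subset inter_subset_left).isBasis_of_subset_of_subset_closure
        inter_subset_right hsp, hExt, hbcond, ?_, ?_⟩
    · ext b
      simp only [mem_inter_iff, mem_empty_iff_false, iff_false, not_and]
      rintro ⟨hbB, hbLeast⟩ hbF
      have hbV : b ∈ V := ⟨⟨hbB, hbF⟩, fun y hy => hbLeast.2 hy.1⟩
      rw [hVemp] at hbV
      exact hbV
    · intro b hb
      have hbV : b ∉ V := by rw [hVemp]; exact notMem_empty b
      have hne : ¬ ∀ y ∈ fundCocct M B b ∩ F₀, b ≤ y := fun h => hbV ⟨hb, h⟩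
      push_neg at hne
      obtain ⟨y, hy, hylt⟩ := hne
      exact ⟨y, hy.1, hy.2, hylt⟩
  · exfalso
    obtain ⟨b₀, hb₀⟩ := nonempty_iff_ne_empty.mpr hVemp
    set F₁ := F₀ \ ⋃ b ∈ V, fundCocct M B b with hF₁
    have hUnion : ∀ {z : α}, z ∈ F₀ → z ∉ F₁ → ∃ b ∈ V, z ∈ fundCocct M B b := by
      intro z hz hz1
      by_contra h
      push_neg at h
      refine hz1 ⟨hz, ?_⟩
      simp only [mem_iUnion, exists_prop, not_exists, not_and]
      exact h
    have hinU : ∀ {b : α}, b ∈ V → ∀ {z : α}, z ∈ fundCocct M B b → z ∉ F₁ := by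
      intro b hbV z hzK hzF₁
      refine hzF₁.2 ?_
      simp only [mem_iUnion, exists_prop]
      exact ⟨b, hbV, hzK⟩
    have hPF₁ : P F₁ := by
      refine ⟨diff_subset.trans hF₀E, ?_, ?_, ?_⟩
      · intro z hz
        by_cases hzB : z ∈ B
        · exact M.mem_closure_of_mem ⟨hzB, hz⟩
            (inter_subset_right.trans (diff_subset.trans hF₀E))
        · have hzF₀ : z ∈ F₀ := hz.1
          have hzE : z ∈ M.E := hF₀E hzF₀
          have hCins := fundCct_subset_insert_of_closure hB (hsp hzF₀) hzB
          obtain ⟨hCc, hCs, hzC⟩ := exists_fundCct hB ⟨hzE, hzB⟩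
          have hsub2 : fundCct M B z \ {z} ⊆ B ∩ F₁ := by
            intro w hw
            have hwBF₀ : w ∈ B ∩ F₀ := by
              rcases hCins hw.1 with h | h
              · exact absurd h hw.2
              · exact h
            refine ⟨hwBF₀.1, hwBF₀.2, ?_⟩
            simp only [mem_iUnion, exists_prop, not_exists, not_and]
            intro b hbV hwK
            have hwb : w = b := by
              rcases fundCocct_subset hB hbV.1.1 hwK with h | h
              · exact h
              · exact absurd hwBF₀.1 h.2
            subst hwb
            have hzK : z ∈ fundCocct M B w := (pairing hB hwBF₀.1 ⟨hzE, hzB⟩).mp hw.1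
            exact hinU hbV hzK hz
          exact M.closure_subset_closure hsub2 (hCc.mem_closure_diff hzC)
      · intro e he
        have heF₀ : e ∈ F₀ := hExt he
        refine ⟨heF₀, ?_⟩
        simp only [mem_iUnion, exists_prop, not_exists, not_and]
        intro b hbV heK
        have hble : b ≤ e := hbV.2 e ⟨heK, heF₀⟩
        have hbne : b ≠ e := fun h => he.1.2 (h ▸ hbV.1.1)
        have hbC : b ∈ fundCct M B e := (pairing hB hbV.1.1 he.1).mpr heK
        exact absurd (he.2.2 hbC) (not_le.mpr (lt_of_le_of_ne hble hbne))
      · rintro e ⟨heE, heBF₁⟩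
        have heB : e ∉ B := fun h => heBF₁ (Or.inl h)
        have heF₁ : e ∉ F₁ := fun h => heBF₁ (Or.inr h)
        by_cases heF₀ : e ∈ F₀
        · obtain ⟨b, hbV, heK⟩ := hUnion heF₀ heF₁
          have hble : b ≤ e := hbV.2 e ⟨heK, heF₀⟩
          have hblt : b < e := lt_of_le_of_ne hble (fun h => heB (h ▸ hbV.1.1))
          refine ⟨b, (pairing hB hbV.1.1 ⟨heE, heB⟩).mpr heK, ?_, hblt⟩
          exact hinU hbV (mem_fundCocct hB hbV.1.1)
        · obtain ⟨y, hyC, hyF₀, hylt⟩ := hbcond e ⟨heE, fun h => h.elim heB heF₀⟩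
          exact ⟨y, hyC, fun h => hyF₀ h.1, hylt⟩
    have heqF : F₀ = F₁ := hmin F₁ hPF₁ diff_subset
    have hb₀F₁ : b₀ ∉ F₁ := hinU hb₀ (mem_fundCocct hB hb₀.1.1)
    rw [← heqF] at hb₀F₁
    exact hb₀F₁ hb₀.1.2

lemma Good.isCyclicFlat [M.Finite] (hB : M.IsBase B) (hG : Good M B F) : IsCyclicFlat M F := by
  obtain ⟨hFE, hBF, hExt, hbcond, hIntF, hdcond⟩ := hG
  have hsp := hBF.subset_closure
  constructor
  · refine ⟨hFE, {K | Cct M✶ K ∧ K ⊆ M.E \ F}, fun K hK => hK.1, ?_⟩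
    apply Subset.antisymm
    · intro e he
      by_cases heB : e ∈ B
      · refine mem_sUnion.mpr ⟨M.E \ M.closure (B \ {e}), ⟨cocct_compl_closure hB heB, ?_⟩, ?_⟩
        · intro z hz
          refine ⟨hz.1, fun hzF => hz.2 (M.closure_subset_closure
            (show B ∩ F ⊆ B \ {e} from fun w hw => ⟨hw.1, fun h => he.2 (h ▸ hw.2)⟩)
            (hsp hzF))⟩
        · exact ⟨he.1,
            (indep_iff_forall_notMem_closure_diff hB.subset_ground).mp hB.indep heB⟩
      · have hecl : e ∉ M.closure (B ∩ F) := by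
          intro hecl
          obtain ⟨y, hyC, hyF, hylt⟩ := hbcond e ⟨he.1, fun h => h.elim heB he.2⟩
          have hins := fundCct_subset_insert_of_closure hB hecl heB
          rcases hins hyC with h | h
          · exact absurd (h ▸ hylt) (lt_irrefl e)
          · exact hyF h.2
        have hind : M.Indep (insert e (B ∩ F)) :=
          ((hB.indep.subset inter_subset_left).insert_indep_iff_of_notMem
            (fun h => heB h.1)).mpr ⟨he.1, hecl⟩
        obtain ⟨B₂, hB₂, hsubB₂⟩ := hind.exists_isBase_superset
        have heB₂ : e ∈ B₂ := hsubB₂ (mem_insert e _)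
        refine mem_sUnion.mpr
          ⟨M.E \ M.closure (B₂ \ {e}), ⟨cocct_compl_closure hB₂ heB₂, ?_⟩, ?_⟩
        · intro z hz
          refine ⟨hz.1, fun hzF => hz.2 (M.closure_subset_closure
            (show B ∩ F ⊆ B₂ \ {e} from fun w hw =>
              ⟨hsubB₂ (mem_insert_of_mem _ hw), fun h => heB ((h ▸ hw) : e ∈ B ∩ F).1⟩)
            (hsp hzF))⟩
        · exact ⟨he.1,
            (indep_iff_forall_notMem_closure_diff hB₂.subset_ground).mp hB₂.indep heB₂⟩
    · intro z hz
      obtain ⟨K, hK, hzK⟩ := hz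
      exact hK.2 hzK
  · refine ⟨{C | Cct M C ∧ C ⊆ F}, fun C hC => hC.1, ?_⟩
    apply Subset.antisymm
    · intro x hx
      by_cases hxB : x ∈ B
      · obtain ⟨y, hyK, hyF, hylt⟩ := hdcond x ⟨hxB, hx⟩
        have hyB : y ∉ B := by
          rcases fundCocct_subset hB hxB hyK with h | h
          · exact absurd h (ne_of_lt hylt)
          · exact h.2
        have hyE : y ∈ M.E := hFE hyF
        have hxC : x ∈ fundCct M B y := (pairing hB hxB ⟨hyE, hyB⟩).mpr hyK
        obtain ⟨hCc, -, -⟩ := exists_fundCct hB ⟨hyE, hyB⟩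
        have hCsF : fundCct M B y ⊆ F :=
          (fundCct_subset_insert_of_closure hB (hsp hyF) hyB).trans
            (insert_subset hyF inter_subset_right)
        exact mem_sUnion.mpr ⟨fundCct M B y, ⟨hCc, hCsF⟩, hxC⟩
      · have hxE : x ∈ M.E := hFE hx
        obtain ⟨hCc, -, hxC⟩ := exists_fundCct hB ⟨hxE, hxB⟩
        have hCsF : fundCct M B x ⊆ F :=
          (fundCct_subset_insert_of_closure hB (hsp hx) hxB).trans
            (insert_subset hx inter_subset_right)
        exact mem_sUnion.mpr ⟨fundCct M B x, ⟨hCc, hCsF⟩, hxC⟩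
    · intro z hz
      obtain ⟨C, hC, hzC⟩ := hz
      exact hC.2 hzC

end Order

end Aux

/-- The external part of a base : unique subset `F` with `B ∩ F` an internal-activity-`0`
base of `M(F)` keeping all external activity, and `B \ F` keeping all internal activity in
`M/F` with no external activity; moreover this subset is a cyclic flat. -/
theorem stmt4 {α : Type*} [LinearOrder α] (M : Matroid α) [M.Finite]
    (B : Set α) (hB : M.IsBase B) :
    ∃ F : Set α, DecompSet M B (ActInt M B) F ∧ IsCyclicFlat M F ∧
      ∀ F' : Set α, DecompSet M B (ActInt M B) F' → F' = F := by
  obtain ⟨F, hF⟩ := good_exists hB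
  exact ⟨F, hF.decompSet hB, hF.isCyclicFlat hB, fun F' hF' => good_eq hB (hF'.good hB) hF⟩

end ActiveBij
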